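/- Let d_b ≥ d_a ≥ 1 be integers. Then the total number of intersecting pairs (Q, R) ∈ 𝒬_{d_a} × ℛ_{d_b} equals q^{2d_b − d_a} · (q^{3d_a} + q^{3d_a−1} − q^{2d_a−1}). -/

import Mathlib

open Polynomial

/-- `Qset F d`: triples `(q₀, q₁, q₂)` of polynomials over `F` with `q₀` monic of degree `d`
and `q₁, q₂` of degree `< d`. -/
def Qset (F : Type*) [Field F] (d : ℕ) : Set (F[X] × F[X] × F[X]) :=
  {t | t.1.Monic ∧ t.1.natDegree = d ∧
    t.2.1.degree < (d : WithBot ℕ) ∧ t.2.2.degree < (d : WithBot ℕ)}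

/-- `Rset F d`: triples `(r₀, r₁, r₂)` of polynomials over `F` with `r₂` monic of degree `d`
and `r₀, r₁` of degree `< d`. -/
def Rset (F : Type*) [Field F] (d : ℕ) : Set (F[X] × F[X] × F[X]) :=
  {t | t.2.2.Monic ∧ t.2.2.natDegree = d ∧
    t.1.degree < (d : WithBot ℕ) ∧ t.2.1.degree < (d : WithBot ℕ)}

/-- A pair `(Q, R)` is intersecting if `q₀r₀ + q₁r₁ + q₂r₂ = 0`. -/
def Intersecting {F : Type*} [Field F] (Q R : F[X] × F[X] × F[X]) : Prop :=
  Q.1 * R.1 + Q.2.1 * R.2.1 + Q.2.2 * R.2.2 = 0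

noncomputable section Stmt7Aux

namespace Stmt7Aux

open Polynomial Finset

variable {F : Type*} [Field F]

/-- Degree of a product is `< a + b` if one factor has degree `≤ a` and the other `< b`. -/
lemma deg_mul_lt {p r : F[X]} {a b : ℕ} (hp : p.degree ≤ (a : WithBot ℕ))
    (hr : r.degree < (b : WithBot ℕ)) :
    (p * r).degree < ((a + b : ℕ) : WithBot ℕ) := by
  rcases eq_or_ne p 0 with h0 | h0
  · rw [h0, zero_mul, degree_zero]
    exact WithBot.bot_lt_coe _
  rcases eq_or_ne r 0 with h1 | h1
  · rw [h1, mul_zero, degree_zero]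
    exact WithBot.bot_lt_coe _
  have hp' : p.natDegree ≤ a := by
    rwa [degree_eq_natDegree h0, Nat.cast_le] at hp
  have hr' : r.natDegree < b := (natDegree_lt_iff_degree_lt h1).mpr hr
  have : (p * r).natDegree < a + b := by
    rw [natDegree_mul h0 h1]; omega
  exact (natDegree_lt_iff_degree_lt (mul_ne_zero h0 h1)).mp this

lemma deg_lt_of_monic_mul {p r : F[X]} {m n : ℕ} (hp : p.Monic) (hd : p.natDegree = m)
    (hr : r.degree < (n : WithBot ℕ)) :
    (p * r).degree < ((m + n : ℕ) : WithBot ℕ) :=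
  deg_mul_lt (by rw [degree_eq_natDegree hp.ne_zero, hd]) hr

lemma monic_sub_X_pow_degree_lt {p : F[X]} {d : ℕ} (hm : p.Monic) (hd : p.natDegree = d) :
    (p - X ^ d).degree < (d : WithBot ℕ) := by
  have h1 : p.degree = (d : WithBot ℕ) := by
    rw [degree_eq_natDegree hm.ne_zero, hd]
  have := degree_sub_lt (h1.trans (degree_X_pow (R := F) d).symm) hm.ne_zero
    (hm.leadingCoeff.trans (monic_X_pow d).leadingCoeff.symm)
  rwa [h1] at this

lemma X_pow_add_natDegree {c : F[X]} {n : ℕ} (hc : c.degree < (n : WithBot ℕ)) :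
    (X ^ n + c).natDegree = n := by
  have : (X ^ n + c).degree = (n : WithBot ℕ) := by
    rw [degree_add_eq_left_of_degree_lt (by rwa [degree_X_pow]), degree_X_pow]
  exact natDegree_eq_of_degree_eq_some this

/-- Monic polynomials of a fixed degree. -/
def MonT (F : Type*) [Field F] (d : ℕ) : Type _ := {p : F[X] // p.Monic ∧ p.natDegree = d}

/-- Monic polynomials of degree `d` are equivalent to polynomials of degree `< d`. -/
def monEquiv (d : ℕ) : MonT F d ≃ degreeLT F d where
  toFun p := ⟨p.1 - X ^ d, mem_degreeLT.mpr (monic_sub_X_pow_degree_lt p.2.1 p.2.2)⟩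
  invFun r := ⟨X ^ d + r.1, monic_X_pow_add (mem_degreeLT.mp r.2),
    X_pow_add_natDegree (mem_degreeLT.mp r.2)⟩
  left_inv p := by
    apply Subtype.ext
    simp
  right_inv r := by
    apply Subtype.ext
    simp

/-- Repackaging of `Qset` as a product. -/
def qsetEquiv (m : ℕ) : ↥(Qset F m) ≃ MonT F m × degreeLT F m × degreeLT F m where
  toFun x := ⟨⟨x.1.1, x.2.1, x.2.2.1⟩, ⟨x.1.2.1, mem_degreeLT.mpr x.2.2.2.1⟩,
    ⟨x.1.2.2, mem_degreeLT.mpr x.2.2.2.2⟩⟩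
  invFun y := ⟨(y.1.1, y.2.1.1, y.2.2.1), y.1.2.1, y.1.2.2,
    mem_degreeLT.mp y.2.1.2, mem_degreeLT.mp y.2.2.2⟩
  left_inv _ := rfl
  right_inv _ := rfl

/-- Repackaging of `Rset` as a product. -/
def rsetEquiv (n : ℕ) : ↥(Rset F n) ≃ MonT F n × degreeLT F n × degreeLT F n where
  toFun x := ⟨⟨x.1.2.2, x.2.1, x.2.2.1⟩, ⟨x.1.1, mem_degreeLT.mpr x.2.2.2.1⟩,
    ⟨x.1.2.1, mem_degreeLT.mpr x.2.2.2.2⟩⟩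
  invFun y := ⟨(y.2.1.1, y.2.2.1, y.1.1), y.1.2.1, y.1.2.2,
    mem_degreeLT.mp y.2.1.2, mem_degreeLT.mp y.2.2.2⟩
  left_inv _ := rfl
  right_inv _ := rfl

/-- A triple of polynomials is primitive if all common divisors are units. -/
def Prim (u : F[X] × F[X] × F[X]) : Prop :=
  ∀ p : F[X], p ∣ u.1 → p ∣ u.2.1 → p ∣ u.2.2 → IsUnit p

/-- Primitive elements of `Qset F m`. -/
def PrimT (F : Type*) [Field F] (m : ℕ) : Type _ :=
  {u : F[X] × F[X] × F[X] // u ∈ Qset F m ∧ Prim u}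

section FiniteCard

variable [Fintype F]

instance (n : ℕ) : Finite (degreeLT F n) :=
  Finite.of_equiv _ (degreeLTEquiv F n).toEquiv.symm

instance (d : ℕ) : Finite (MonT F d) := Finite.of_equiv _ (monEquiv d).symm

instance (m : ℕ) : Finite ↥(Qset F m) := Finite.of_equiv _ (qsetEquiv m).symm

instance (n : ℕ) : Finite ↥(Rset F n) := Finite.of_equiv _ (rsetEquiv n).symm

instance (m : ℕ) : Finite (PrimT F m) :=
  Finite.of_injective (fun u => (⟨u.1, u.2.1⟩ : ↥(Qset F m)))
    (by intro a b h; have h2 := Subtype.ext_iff.mp h; exact Subtype.ext h2)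

lemma card_degreeLT (n : ℕ) : Nat.card (degreeLT F n) = Fintype.card F ^ n := by
  rw [Nat.card_congr (degreeLTEquiv F n).toEquiv, Nat.card_eq_fintype_card]
  simp

lemma card_MonT (d : ℕ) : Nat.card (MonT F d) = Fintype.card F ^ d := by
  rw [Nat.card_congr (monEquiv d)]
  exact card_degreeLT d

lemma card_qset (m : ℕ) : Nat.card ↥(Qset F m) = Fintype.card F ^ (3 * m) := by
  rw [Nat.card_congr (qsetEquiv m), Nat.card_prod, Nat.card_prod, card_MonT,
    card_degreeLT, ← pow_add, ← pow_add]
  congr 1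
  omega

end FiniteCard

/-- Cardinality of a sigma type over a `Fintype`. -/
lemma nat_card_sigma {ι : Type*} [Fintype ι] (f : ι → Type*) [∀ i, Finite (f i)] :
    Nat.card (Σ i, f i) = ∑ i : ι, Nat.card (f i) := by
  haveI : ∀ i, Fintype (f i) := fun i => Fintype.ofFinite _
  simp only [Nat.card_eq_fintype_card]
  exact Fintype.card_sigma

/-- Counting lemma: a surjective additive map has equal-sized fibers. -/
lemma card_eq_card_fiber_mul {V W : Type*} [AddCommGroup V] [AddCommGroup W] (f : V →+ W)
    (hs : Function.Surjective f) (w : W) :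
    Nat.card V = Nat.card W * Nat.card {v : V // f v = w} := by
  have hfib : ∀ w' : W, Nonempty ({v : V // f v = w'} ≃ {v : V // f v = w}) := by
    intro w'
    obtain ⟨x0, hx0⟩ := hs w
    obtain ⟨x1, hx1⟩ := hs w'
    exact ⟨{ toFun := fun v => ⟨v.1 - x1 + x0, by
               simp [map_add, map_sub, v.2, hx0, hx1]⟩
             invFun := fun v => ⟨v.1 - x0 + x1, by
               simp [map_add, map_sub, v.2, hx0, hx1]⟩
             left_inv := fun v => by
               apply Subtype.ext
               show (v : V) - x1 + x0 - x0 + x1 = (v : V)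
               abel
             right_inv := fun v => by
               apply Subtype.ext
               show (v : V) - x0 + x1 - x1 + x0 = (v : V)
               abel }⟩
  calc Nat.card V = Nat.card (Σ w' : W, {v : V // f v = w'}) :=
        Nat.card_congr (Equiv.sigmaFiberEquiv f).symm
    _ = Nat.card (W × {v : V // f v = w}) :=
        Nat.card_congr ((Equiv.sigmaCongrRight fun w' => (hfib w').some).trans
          (Equiv.sigmaEquivProd W _))
    _ = Nat.card W * Nat.card {v : V // f v = w} := Nat.card_prod _ _
section Core

variable [Fintype F]

/-- The core counting lemma: for a primitive `u ∈ Qset F m` with `m ≤ n`, the number of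
`R ∈ Rset F n` intersecting `u` is `q ^ (2n - m)`. -/
lemma card_fiber {m n : ℕ} (hmn : m ≤ n) (u : F[X] × F[X] × F[X])
    (hu : u ∈ Qset F m) (hprim : Prim u) :
    Nat.card {R : F[X] × F[X] × F[X] // R ∈ Rset F n ∧ Intersecting u R} =
      Fintype.card F ^ (2 * n - m) := by
  classical
  obtain ⟨hu0, hud, hu1, hu2⟩ := hu
  -- the additive map
  let f : (degreeLT F n × degreeLT F n × degreeLT F n) →+ degreeLT F (m + n) :=
    AddMonoidHom.mk' (fun v => ⟨u.1 * v.1.1 + u.2.1 * v.2.1.1 + u.2.2 * v.2.2.1,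
      mem_degreeLT.mpr (by
        refine lt_of_le_of_lt (degree_add_le _ _) (max_lt (lt_of_le_of_lt (degree_add_le _ _)
          (max_lt ?_ ?_)) ?_)
        · exact deg_lt_of_monic_mul hu0 hud (mem_degreeLT.mp v.1.2)
        · exact deg_mul_lt hu1.le (mem_degreeLT.mp v.2.1.2)
        · exact deg_mul_lt hu2.le (mem_degreeLT.mp v.2.2.2))⟩)
      (by
        intro v w
        apply Subtype.ext
        show u.1 * (v.1 + w.1 : degreeLT F n).1 + u.2.1 * (v.2.1 + w.2.1 : degreeLT F n).1
            + u.2.2 * (v.2.2 + w.2.2 : degreeLT F n).1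
          = (u.1 * v.1.1 + u.2.1 * v.2.1.1 + u.2.2 * v.2.2.1)
            + (u.1 * w.1.1 + u.2.1 * w.2.1.1 + u.2.2 * w.2.2.1)
        simp only [Submodule.coe_add]
        ring)
  have hfapp : ∀ v, (f v : F[X]) = u.1 * (v.1 : F[X]) + u.2.1 * (v.2.1 : F[X])
      + u.2.2 * (v.2.2 : F[X]) := fun v => rfl
  -- surjectivity
  have hsurj : Function.Surjective f := by
    rintro ⟨P, hP⟩
    obtain ⟨a, b, c, habc⟩ : ∃ a b c : F[X], u.1 * a + u.2.1 * b + u.2.2 * c = P := by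
      set g1 := EuclideanDomain.gcd u.2.1 u.2.2 with hg1
      set g0 := EuclideanDomain.gcd u.1 g1 with hg0
      have hunit : IsUnit g0 :=
        hprim g0 (EuclideanDomain.gcd_dvd_left _ _)
          ((EuclideanDomain.gcd_dvd_right _ _).trans (EuclideanDomain.gcd_dvd_left _ _))
          ((EuclideanDomain.gcd_dvd_right _ _).trans (EuclideanDomain.gcd_dvd_right _ _))
      obtain ⟨w, hw⟩ := hunit.exists_right_inv
      have e0 : g0 = u.1 * EuclideanDomain.gcdA u.1 g1 + g1 * EuclideanDomain.gcdB u.1 g1 :=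
        EuclideanDomain.gcd_eq_gcd_ab u.1 g1
      have e1 : g1 = u.2.1 * EuclideanDomain.gcdA u.2.1 u.2.2
          + u.2.2 * EuclideanDomain.gcdB u.2.1 u.2.2 :=
        EuclideanDomain.gcd_eq_gcd_ab u.2.1 u.2.2
      refine ⟨EuclideanDomain.gcdA u.1 g1 * (w * P),
        EuclideanDomain.gcdA u.2.1 u.2.2 * (EuclideanDomain.gcdB u.1 g1 * (w * P)),
        EuclideanDomain.gcdB u.2.1 u.2.2 * (EuclideanDomain.gcdB u.1 g1 * (w * P)), ?_⟩
      linear_combination (-(w * P)) * e0 + (-(EuclideanDomain.gcdB u.1 g1 * (w * P))) * e1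
        + P * hw
    set b' := b %ₘ u.1 with hb'
    set c' := c %ₘ u.1 with hc'
    set a' := a + u.2.1 * (b /ₘ u.1) + u.2.2 * (c /ₘ u.1) with ha'
    have hb := modByMonic_add_div b u.1
    have hc := modByMonic_add_div c u.1
    have key : u.1 * a' + u.2.1 * b' + u.2.2 * c' = P := by
      rw [ha']
      linear_combination habc + u.2.1 * hb + u.2.2 * hc
    have hdu : u.1.degree = (m : WithBot ℕ) := by
      rw [degree_eq_natDegree hu0.ne_zero, hud]
    have hmn' : (m : WithBot ℕ) ≤ (n : WithBot ℕ) := by exact_mod_cast hmn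
    have hdb' : b'.degree < (n : WithBot ℕ) :=
      lt_of_lt_of_le (by rw [← hdu]; exact degree_modByMonic_lt b hu0) hmn'
    have hdc' : c'.degree < (n : WithBot ℕ) :=
      lt_of_lt_of_le (by rw [← hdu]; exact degree_modByMonic_lt c hu0) hmn'
    have hda' : a'.degree < (n : WithBot ℕ) := by
      have hrw : u.1 * a' = P - u.2.1 * b' - u.2.2 * c' := by linear_combination key
      by_cases h0 : a' = 0
      · rw [h0, degree_zero]; exact WithBot.bot_lt_coe _
      · have hdeg : (u.1 * a').degree < ((m + n : ℕ) : WithBot ℕ) := by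
          rw [hrw]
          refine lt_of_le_of_lt (degree_sub_le _ _) (max_lt (lt_of_le_of_lt (degree_sub_le _ _)
            (max_lt ?_ ?_)) ?_)
          · exact mem_degreeLT.mp hP
          · exact deg_mul_lt hu1.le hdb'
          · exact deg_mul_lt hu2.le hdc'
        have h2 : (u.1 * a').natDegree < m + n :=
          (natDegree_lt_iff_degree_lt (mul_ne_zero hu0.ne_zero h0)).mpr hdeg
        rw [natDegree_mul hu0.ne_zero h0, hud] at h2
        exact (natDegree_lt_iff_degree_lt h0).mp (by omega)
    exact ⟨(⟨a', mem_degreeLT.mpr hda'⟩, ⟨b', mem_degreeLT.mpr hdb'⟩,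
      ⟨c', mem_degreeLT.mpr hdc'⟩), Subtype.ext key⟩
  -- the target element
  have hw0mem : -(u.2.2 * X ^ n) ∈ degreeLT F (m + n) := by
    rw [mem_degreeLT, degree_neg]
    have := deg_mul_lt (degree_X_pow_le (R := F) n) hu2
    rw [mul_comm] at this
    rwa [show n + m = m + n by omega] at this
  set w0 : degreeLT F (m + n) := ⟨-(u.2.2 * X ^ n), hw0mem⟩ with hw0def
  -- the solution set is equivalent to the fiber of f over w0
  have e2 : {R : F[X] × F[X] × F[X] // R ∈ Rset F n ∧ Intersecting u R} ≃
      {v : degreeLT F n × degreeLT F n × degreeLT F n // f v = w0} :=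
    { toFun := fun R => ⟨(⟨R.1.1, mem_degreeLT.mpr R.2.1.2.2.1⟩,
        ⟨R.1.2.1, mem_degreeLT.mpr R.2.1.2.2.2⟩,
        ⟨R.1.2.2 - X ^ n, mem_degreeLT.mpr (monic_sub_X_pow_degree_lt R.2.1.1 R.2.1.2.1)⟩), by
        apply Subtype.ext
        rw [hfapp]
        have hI : u.1 * R.1.1 + u.2.1 * R.1.2.1 + u.2.2 * R.1.2.2 = 0 := R.2.2
        show u.1 * R.1.1 + u.2.1 * R.1.2.1 + u.2.2 * (R.1.2.2 - X ^ n) = -(u.2.2 * X ^ n)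
        linear_combination hI⟩
      invFun := fun v => ⟨(v.1.1.1, v.1.2.1.1, X ^ n + v.1.2.2.1),
        ⟨⟨monic_X_pow_add (mem_degreeLT.mp v.1.2.2.2),
          X_pow_add_natDegree (mem_degreeLT.mp v.1.2.2.2),
          mem_degreeLT.mp v.1.1.2, mem_degreeLT.mp v.1.2.1.2⟩, by
          have hv := congrArg Subtype.val v.2
          rw [hfapp] at hv
          show u.1 * v.1.1.1 + u.2.1 * v.1.2.1.1 + u.2.2 * (X ^ n + v.1.2.2.1) = 0
          linear_combination hv⟩⟩
      left_inv := fun R => by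
        apply Subtype.ext
        exact Prod.ext rfl (Prod.ext rfl (by ring))
      right_inv := fun v => by
        apply Subtype.ext
        exact Prod.ext rfl (Prod.ext rfl (Subtype.ext (by ring))) }
  rw [Nat.card_congr e2]
  have hVcard : Nat.card (degreeLT F n × degreeLT F n × degreeLT F n)
      = Fintype.card F ^ (3 * n) := by
    rw [Nat.card_prod, Nat.card_prod, card_degreeLT, ← pow_add, ← pow_add]
    congr 1
    omega
  have hcards := card_eq_card_fiber_mul f hsurj w0
  rw [hVcard, card_degreeLT] at hcards
  have hpos : 0 < Fintype.card F ^ (m + n) := pow_pos Fintype.card_pos _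
  refine (Nat.eq_of_mul_eq_mul_left hpos ?_).symm
  rw [← hcards, ← pow_add]
  congr 1
  omega

end Core
section Strat

variable [DecidableEq F]

/-- gcd of the three components of a triple. -/
def gcd3 (x : F[X] × F[X] × F[X]) : F[X] := gcd x.1 (gcd x.2.1 x.2.2)

lemma gcd3_smul {h : F[X]} (hm : h.Monic) {u : F[X] × F[X] × F[X]} (hu : Prim u) :
    gcd3 (h * u.1, h * u.2.1, h * u.2.2) = h := by
  have hunit : IsUnit (gcd u.1 (gcd u.2.1 u.2.2)) :=
    hu _ (gcd_dvd_left _ _) ((gcd_dvd_right _ _).trans (gcd_dvd_left _ _))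
      ((gcd_dvd_right _ _).trans (gcd_dvd_right _ _))
  have h1 : gcd3 (h * u.1, h * u.2.1, h * u.2.2)
      = h * gcd u.1 (gcd u.2.1 u.2.2) := by
    unfold gcd3
    rw [_root_.gcd_mul_left, hm.normalize_eq_self, _root_.gcd_mul_left, hm.normalize_eq_self]
  rw [h1, ← _root_.normalize_gcd, _root_.normalize_eq_one.mpr hunit, mul_one]

lemma helper_sigma_ext {m : ℕ} (a b : Σ e : Fin (m + 1), MonT F e × PrimT F (m - e))
    (h1 : (a.fst : ℕ) = (b.fst : ℕ)) (h2 : a.snd.1.1 = b.snd.1.1)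
    (h3 : a.snd.2.1 = b.snd.2.1) : a = b := by
  rcases a with ⟨e1, p1, u1⟩
  rcases b with ⟨e2, p2, u2⟩
  have he : e1 = e2 := Fin.ext h1
  subst he
  simp only [Sigma.mk.inj_iff, heq_eq_eq, true_and]
  exact Prod.ext (Subtype.ext h2) (Subtype.ext h3)

lemma gcd3_ne {m : ℕ} (x : ↥(Qset F m)) : gcd3 x.1 ≠ 0 :=
  fun h => x.2.1.ne_zero ((gcd_eq_zero_iff _ _).mp h).1

lemma gcd3_monic {m : ℕ} (x : ↥(Qset F m)) : (gcd3 x.1).Monic := by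
  have := monic_normalize (p := gcd3 x.1) (gcd3_ne x)
  rwa [show normalize (gcd3 x.1) = gcd3 x.1 from normalize_gcd _ _] at this

lemma gcd3_dvd0 {m : ℕ} (x : ↥(Qset F m)) : gcd3 x.1 ∣ x.1.1 := gcd_dvd_left _ _
lemma gcd3_dvd1 {m : ℕ} (x : ↥(Qset F m)) : gcd3 x.1 ∣ x.1.2.1 :=
  (gcd_dvd_right _ _).trans (gcd_dvd_left _ _)
lemma gcd3_dvd2 {m : ℕ} (x : ↥(Qset F m)) : gcd3 x.1 ∣ x.1.2.2 :=
  (gcd_dvd_right _ _).trans (gcd_dvd_right _ _)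

/-- Forward map of the stratification. -/
def stratTo (m : ℕ) (x : ↥(Qset F m)) : Σ e : Fin (m + 1), MonT F e × PrimT F (m - e) :=
  ⟨⟨(gcd3 x.1).natDegree, by
      have := natDegree_le_of_dvd (gcd3_dvd0 x) x.2.1.ne_zero
      rw [x.2.2.1] at this
      omega⟩,
    ⟨gcd3 x.1, gcd3_monic x, rfl⟩,
    ⟨(x.1.1 / gcd3 x.1, x.1.2.1 / gcd3 x.1, x.1.2.2 / gcd3 x.1), by
      have gne := gcd3_ne x
      have hq0 : gcd3 x.1 * (x.1.1 / gcd3 x.1) = x.1.1 :=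
        EuclideanDomain.mul_div_cancel' gne (gcd3_dvd0 x)
      have hq1 : gcd3 x.1 * (x.1.2.1 / gcd3 x.1) = x.1.2.1 :=
        EuclideanDomain.mul_div_cancel' gne (gcd3_dvd1 x)
      have hq2 : gcd3 x.1 * (x.1.2.2 / gcd3 x.1) = x.1.2.2 :=
        EuclideanDomain.mul_div_cancel' gne (gcd3_dvd2 x)
      have hu0m : (x.1.1 / gcd3 x.1).Monic :=
        (gcd3_monic x).of_mul_monic_left (hq0.symm ▸ x.2.1)
      have hdeg : ∀ y : F[X], gcd3 x.1 * (y / gcd3 x.1) = y →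
          y.degree < (m : WithBot ℕ) →
          (y / gcd3 x.1).degree < ((m - (gcd3 x.1).natDegree : ℕ) : WithBot ℕ) := by
        intro y hy hyd
        by_cases h0 : y / gcd3 x.1 = 0
        · rw [h0, degree_zero]; exact WithBot.bot_lt_coe _
        · have hyne : y ≠ 0 := by
            intro h
            apply h0
            rw [h]
            exact EuclideanDomain.zero_div
          have hnat := natDegree_mul gne h0
          rw [hy] at hnat
          have hym : y.natDegree < m := (natDegree_lt_iff_degree_lt hyne).mpr hyd
          exact (natDegree_lt_iff_degree_lt h0).mp (by omega)
      refine ⟨⟨hu0m, ?_, hdeg _ hq1 x.2.2.2.1, hdeg _ hq2 x.2.2.2.2⟩, ?_⟩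
      · show (x.1.1 / gcd3 x.1).natDegree = m - (gcd3 x.1).natDegree
        have := natDegree_mul gne hu0m.ne_zero
        rw [hq0, x.2.2.1] at this
        have hle := natDegree_le_of_dvd (gcd3_dvd0 x) x.2.1.ne_zero
        rw [x.2.2.1] at hle
        omega
      · intro p hp0 hp1 hp2
        have hd : gcd3 x.1 * p ∣ gcd3 x.1 := by
          refine dvd_gcd ?_ (dvd_gcd ?_ ?_)
          · exact hq0 ▸ mul_dvd_mul_left _ hp0
          · exact hq1 ▸ mul_dvd_mul_left _ hp1
          · exact hq2 ▸ mul_dvd_mul_left _ hp2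
        have : p ∣ 1 := (mul_dvd_mul_iff_left gne).mp (by simpa using hd)
        exact isUnit_of_dvd_one this⟩⟩

/-- Inverse map of the stratification. -/
def stratFrom (m : ℕ) (y : Σ e : Fin (m + 1), MonT F e × PrimT F (m - e)) : ↥(Qset F m) :=
  ⟨(y.2.1.1 * y.2.2.1.1, y.2.1.1 * y.2.2.1.2.1, y.2.1.1 * y.2.2.1.2.2), by
    have hm := y.2.1.2.1
    have hd := y.2.1.2.2
    have hu0 : (y.2.2.1.1 : F[X]).Monic := y.2.2.2.1.1
    have hud : (y.2.2.1.1 : F[X]).natDegree = m - (y.1 : ℕ) := y.2.2.2.1.2.1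
    have hu1 := y.2.2.2.1.2.2.1
    have hu2 := y.2.2.2.1.2.2.2
    have hlt : (y.1 : ℕ) ≤ m := by omega
    refine ⟨hm.mul hu0, ?_, ?_, ?_⟩
    · rw [natDegree_mul hm.ne_zero hu0.ne_zero, hd, hud]
      omega
    · have := deg_lt_of_monic_mul hm hd hu1
      rwa [show (y.1 : ℕ) + (m - (y.1 : ℕ)) = m by omega] at this
    · have := deg_lt_of_monic_mul hm hd hu2
      rwa [show (y.1 : ℕ) + (m - (y.1 : ℕ)) = m by omega] at this⟩

/-- Stratification of `Qset F m` by the monic gcd of the triple. -/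
def strat (m : ℕ) : ↥(Qset F m) ≃ Σ e : Fin (m + 1), MonT F e × PrimT F (m - e) where
  toFun := stratTo m
  invFun := stratFrom m
  left_inv := fun x => by
    have gne := gcd3_ne x
    apply Subtype.ext
    show (gcd3 x.1 * (x.1.1 / gcd3 x.1), gcd3 x.1 * (x.1.2.1 / gcd3 x.1),
      gcd3 x.1 * (x.1.2.2 / gcd3 x.1)) = x.1
    exact Prod.ext (EuclideanDomain.mul_div_cancel' gne (gcd3_dvd0 x))
      (Prod.ext (EuclideanDomain.mul_div_cancel' gne (gcd3_dvd1 x))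
        (EuclideanDomain.mul_div_cancel' gne (gcd3_dvd2 x)))
  right_inv := fun y => by
    have hg : gcd3 (stratFrom m y).1 = y.2.1.1 := gcd3_smul y.2.1.2.1 y.2.2.2.2
    have hne : (y.2.1.1 : F[X]) ≠ 0 := y.2.1.2.1.ne_zero
    apply helper_sigma_ext
    · show (gcd3 (stratFrom m y).1).natDegree = (y.1 : ℕ)
      rw [hg, y.2.1.2.2]
    · exact hg
    · show ((stratFrom m y).1.1 / gcd3 (stratFrom m y).1,
        (stratFrom m y).1.2.1 / gcd3 (stratFrom m y).1,
        (stratFrom m y).1.2.2 / gcd3 (stratFrom m y).1) = y.2.2.1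
      rw [hg]
      exact Prod.ext (mul_div_cancel_left₀ _ hne)
        (Prod.ext (mul_div_cancel_left₀ _ hne) (mul_div_cancel_left₀ _ hne))

end Strat
section Count

variable [Fintype F] [DecidableEq F]

lemma key2 (m : ℕ) :
    ∑ e ∈ Finset.range (m + 1), Fintype.card F ^ e * Nat.card (PrimT F (m - e))
      = Fintype.card F ^ (3 * m) := by
  have h1 := card_qset (F := F) m
  rw [Nat.card_congr (strat (F := F) m), nat_card_sigma] at h1
  rw [← h1, ← Fin.sum_univ_eq_sum_range
    (fun e => Fintype.card F ^ e * Nat.card (PrimT F (m - e))) (m + 1)]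
  refine Finset.sum_congr rfl fun e _ => ?_
  rw [Nat.card_prod, card_MonT]

lemma primT0 : Nat.card (PrimT F 0) = 1 := by
  have := key2 (F := F) 0
  simpa using this

lemma Gsucc (m : ℕ) :
    Nat.card (PrimT F (m + 1)) + Fintype.card F ^ (3 * m + 1)
      = Fintype.card F ^ (3 * m + 3) := by
  have h1 := key2 (F := F) (m + 1)
  have h2 := key2 (F := F) m
  rw [Finset.sum_range_succ'] at h1
  simp only [Nat.sub_zero] at h1
  have hsum : ∑ e ∈ Finset.range (m + 1),
      Fintype.card F ^ (e + 1) * Nat.card (PrimT F (m + 1 - (e + 1)))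
        = Fintype.card F ^ (3 * m + 1) := by
    calc ∑ e ∈ Finset.range (m + 1),
        Fintype.card F ^ (e + 1) * Nat.card (PrimT F (m + 1 - (e + 1)))
        = ∑ e ∈ Finset.range (m + 1),
          Fintype.card F * (Fintype.card F ^ e * Nat.card (PrimT F (m - e))) := by
          refine Finset.sum_congr rfl fun e _ => ?_
          rw [Nat.succ_sub_succ]
          ring
      _ = Fintype.card F * Fintype.card F ^ (3 * m) := by rw [← Finset.mul_sum, h2]
      _ = Fintype.card F ^ (3 * m + 1) := by ring
  rw [hsum, pow_zero, one_mul] at h1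
  rw [show 3 * (m + 1) = 3 * m + 3 by ring] at h1
  omega

lemma Tlemma : ∀ m : ℕ,
    (∑ e ∈ Finset.range (m + 2), Fintype.card F ^ (2 * e) * Nat.card (PrimT F (m + 1 - e)))
      + Fintype.card F ^ (2 * m + 1)
    = Fintype.card F ^ (3 * m + 3) + Fintype.card F ^ (3 * m + 2) := by
  intro m
  induction m with
  | zero =>
    rw [Finset.sum_range_succ, Finset.sum_range_one]
    have hG0 := primT0 (F := F)
    have hG1 := Gsucc (F := F) 0
    norm_num at hG1 ⊢
    rw [hG0]
    omega
  | succ k ih =>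
    rw [Finset.sum_range_succ']
    simp only [Nat.sub_zero, Nat.succ_sub_succ, mul_zero, pow_zero, one_mul]
    have hsum : ∑ e ∈ Finset.range (k + 2),
        Fintype.card F ^ (2 * (e + 1)) * Nat.card (PrimT F (k + 1 - e))
          = Fintype.card F ^ 2 * ∑ e ∈ Finset.range (k + 2),
            Fintype.card F ^ (2 * e) * Nat.card (PrimT F (k + 1 - e)) := by
      rw [Finset.mul_sum]
      exact Finset.sum_congr rfl fun e _ => by ring
    rw [hsum]
    have p1 : Fintype.card F ^ 2 * Fintype.card F ^ (2 * k + 1)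
        = Fintype.card F ^ (2 * (k + 1) + 1) := by
      rw [← pow_add]; congr 1; omega
    have p2 : Fintype.card F ^ 2 * Fintype.card F ^ (3 * k + 3)
        = Fintype.card F ^ (3 * k + 5) := by
      rw [← pow_add]; congr 1; omega
    have p3 : Fintype.card F ^ 2 * Fintype.card F ^ (3 * k + 2)
        = Fintype.card F ^ (3 * k + 4) := by
      rw [← pow_add]; congr 1; omega
    have hmul := congrArg (HMul.hMul (Fintype.card F ^ 2)) ih
    rw [Nat.mul_add, Nat.mul_add, p1, p2, p3] at hmul
    have hG := Gsucc (F := F) (k + 1)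
    rw [show 3 * (k + 1) + 1 = 3 * k + 4 by ring, show 3 * (k + 1) + 3 = 3 * k + 6 by ring] at hG
    rw [show 3 * (k + 1) + 3 = 3 * k + 6 by ring, show 3 * (k + 1) + 2 = 3 * k + 5 by ring]
    omega

end Count

end Stmt7Aux

end Stmt7Aux

open Stmt7Aux in
theorem stmt_7 (F : Type*) [Field F] [Fintype F] (q : ℕ) (hq : q = Fintype.card F)
    (da db : ℕ) (h1 : 1 ≤ da) (h2 : da ≤ db) :
    Set.ncard {p : (F[X] × F[X] × F[X]) × (F[X] × F[X] × F[X]) |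
        p.1 ∈ Qset F da ∧ p.2 ∈ Rset F db ∧ Intersecting p.1 p.2} =
      q ^ (2 * db - da) * (q ^ (3 * da) + q ^ (3 * da - 1) - q ^ (2 * da - 1)) := by
  letI : DecidableEq F := Classical.decEq F
  subst hq
  obtain ⟨k, rfl⟩ : ∃ k, da = k + 1 := ⟨da - 1, by omega⟩
  set da := k + 1 with hda
  rw [← Nat.card_coe_set_eq]
  -- repackage as a sigma type over Qset
  have E1 : ↥{p : (F[X] × F[X] × F[X]) × (F[X] × F[X] × F[X]) |
      p.1 ∈ Qset F da ∧ p.2 ∈ Rset F db ∧ Intersecting p.1 p.2} ≃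
      (Σ x : ↥(Qset F da), {R : F[X] × F[X] × F[X] // R ∈ Rset F db ∧ Intersecting x.1 R}) :=
    { toFun := fun s => ⟨⟨s.1.1, s.2.1⟩, ⟨s.1.2, s.2.2.1, s.2.2.2⟩⟩
      invFun := fun t => ⟨(t.1.1, t.2.1), t.1.2, t.2.2.1, t.2.2.2⟩
      left_inv := fun s => rfl
      right_inv := fun t => rfl }
  haveI : ∀ (y : Σ e : Fin (da + 1), MonT F e × PrimT F (da - e)),
      Finite {R : F[X] × F[X] × F[X] //
        R ∈ Rset F db ∧ Intersecting ((strat da).symm y).1 R} := fun y =>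
    Finite.of_injective (fun R => (⟨R.1, R.2.1⟩ : ↥(Rset F db)))
      (by intro a b h; have h2 := Subtype.ext_iff.mp h; exact Subtype.ext h2)
  haveI : ∀ d : ℕ, Fintype (MonT F d) := fun d => Fintype.ofFinite _
  haveI : ∀ d : ℕ, Fintype (PrimT F d) := fun d => Fintype.ofFinite _
  rw [Nat.card_congr (E1.trans (Equiv.sigmaCongrLeft' (strat da))), nat_card_sigma]
  -- evaluate the fibers
  have hfib : ∀ y : (Σ e : Fin (da + 1), MonT F e × PrimT F (da - e)),
      Nat.card {R : F[X] × F[X] × F[X] //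
          R ∈ Rset F db ∧ Intersecting ((strat da).symm y).1 R}
        = Fintype.card F ^ (2 * db - da + (y.1 : ℕ)) := by
    rintro ⟨e, h, U⟩
    have hne : (h.1 : F[X]) ≠ 0 := h.2.1.ne_zero
    have hiff : ∀ R : F[X] × F[X] × F[X],
        (R ∈ Rset F db ∧ Intersecting ((strat da).symm ⟨e, h, U⟩).1 R) ↔
        (R ∈ Rset F db ∧ Intersecting U.1 R) := by
      intro R
      apply and_congr_right
      intro _
      constructor
      · intro hh
        have hh' : h.1 * U.1.1 * R.1 + h.1 * U.1.2.1 * R.2.1 + h.1 * U.1.2.2 * R.2.2 = 0 := hh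
        have hz : h.1 * (U.1.1 * R.1 + U.1.2.1 * R.2.1 + U.1.2.2 * R.2.2) = 0 := by
          linear_combination hh'
        rcases mul_eq_zero.mp hz with h' | h'
        · exact absurd h' hne
        · exact h'
      · intro hh
        have hh' : U.1.1 * R.1 + U.1.2.1 * R.2.1 + U.1.2.2 * R.2.2 = 0 := hh
        show h.1 * U.1.1 * R.1 + h.1 * U.1.2.1 * R.2.1 + h.1 * U.1.2.2 * R.2.2 = 0
        linear_combination h.1 * hh'
    rw [Nat.card_congr (Equiv.subtypeEquivRight hiff)]
    rw [card_fiber (m := da - (e : ℕ)) (le_trans (Nat.sub_le da e) h2) U.1 U.2.1 U.2.2]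
    have := e.isLt
    congr 1
    dsimp only
    omega
  calc ∑ y : (Σ e : Fin (da + 1), MonT F e × PrimT F (da - e)),
        Nat.card {R : F[X] × F[X] × F[X] //
          R ∈ Rset F db ∧ Intersecting ((strat da).symm y).1 R}
      = ∑ y : (Σ e : Fin (da + 1), MonT F e × PrimT F (da - e)),
          Fintype.card F ^ (2 * db - da + (y.1 : ℕ)) :=
        Finset.sum_congr rfl fun y _ => hfib y
    _ = ∑ e : Fin (da + 1), ∑ p : MonT F (e : ℕ) × PrimT F (da - (e : ℕ)),
          Fintype.card F ^ (2 * db - da + (e : ℕ)) := by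
        rw [← Finset.univ_sigma_univ, Finset.sum_sigma]
    _ = ∑ e : Fin (da + 1), Fintype.card F ^ (e : ℕ) * Nat.card (PrimT F (da - (e : ℕ)))
          * Fintype.card F ^ (2 * db - da + (e : ℕ)) := by
        refine Finset.sum_congr rfl fun e _ => ?_
        rw [Finset.sum_const, Finset.card_univ, smul_eq_mul, Fintype.card_prod]
        congr 2
        · rw [← Nat.card_eq_fintype_card, card_MonT]
        · rw [← Nat.card_eq_fintype_card]
    _ = ∑ e ∈ Finset.range (da + 1), Fintype.card F ^ e * Nat.card (PrimT F (da - e))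
          * Fintype.card F ^ (2 * db - da + e) :=
        Fin.sum_univ_eq_sum_range
          (fun e => Fintype.card F ^ e * Nat.card (PrimT F (da - e))
            * Fintype.card F ^ (2 * db - da + e)) (da + 1)
    _ = ∑ e ∈ Finset.range (da + 1), Fintype.card F ^ (2 * db - da)
          * (Fintype.card F ^ (2 * e) * Nat.card (PrimT F (da - e))) := by
        refine Finset.sum_congr rfl fun e _ => ?_
        rw [pow_add]
        ring
    _ = Fintype.card F ^ (2 * db - da)
          * ∑ e ∈ Finset.range (da + 1), Fintype.card F ^ (2 * e)
            * Nat.card (PrimT F (da - e)) := by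
        rw [Finset.mul_sum]
    _ = Fintype.card F ^ (2 * db - da) * (Fintype.card F ^ (3 * da)
          + Fintype.card F ^ (3 * da - 1) - Fintype.card F ^ (2 * da - 1)) := by
        have hT := Tlemma (F := F) k
        congr 1
        rw [show 3 * da - 1 = 3 * k + 2 by omega, show 2 * da - 1 = 2 * k + 1 by omega,
          show 3 * da = 3 * k + 3 by omega]
        simp only [hda]
        rw [show k + 1 + 1 = k + 2 by omega]
        omega
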